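/- The abstract successor function is injective: for a word σ over a pushdown alphabet, if SUCC(abs, σ, i) = SUCC(abs, σ, i') and both are defined, then i = i'. -/
import Mathlib


inductive SymKind where
  | call | ret | intl
deriving DecidableEq

/-- Well-matched words over a pushdown alphabet, where `k` assigns to each
letter its kind (call, return, or internal). -/
inductive WellMatched {A : Type*} (k : A → SymKind) : List A → Prop
  | nil : WellMatched k []
  | int {a : A} {s : List A} : k a = SymKind.intl → WellMatched k s →
      WellMatched k (a :: s)
  | matched {c r : A} {s s' : List A} : k c = SymKind.call → k r = SymKind.ret →
      WellMatched k s → WellMatched k s' →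
      WellMatched k (c :: (s ++ r :: s'))

/-- Number of call symbols in a finite word. -/
def callCount {A : Type*} (k : A → SymKind) (s : List A) : ℕ :=
  s.countP (fun a => decide (k a = SymKind.call))

/-- Number of return symbols in a finite word. -/
def retCount {A : Type*} (k : A → SymKind) (s : List A) : ℕ :=
  s.countP (fun a => decide (k a = SymKind.ret))

/-- The finite subword `σ[i, j-1]` of the infinite word `σ` (letters at
positions `i, i+1, ..., j-1`). -/
def wordSlice {A : Type*} (σ : ℕ → A) (i j : ℕ) : List A :=
  (List.range (j - i)).map fun n => σ (i + n)

/-- `j` is a matching return of position `i`: `j > i`, `j` is a return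
position, and the subword `σ[i+1, j-1]` is well-matched. -/
def MatchRet {A : Type*} (k : A → SymKind) (σ : ℕ → A) (i j : ℕ) : Prop :=
  i < j ∧ k (σ j) = SymKind.ret ∧ WellMatched k (wordSlice σ (i + 1) j)

/-- The abstract-successor relation `SUCC(abs, σ, i) = j`. -/
def AbsSucc {A : Type*} (k : A → SymKind) (σ : ℕ → A) (i j : ℕ) : Prop :=
  if k (σ i) = SymKind.call then MatchRet k σ i j
  else j = i + 1 ∧ k (σ (i + 1)) ≠ SymKind.ret

/-- `j` is a candidate caller of `i`: a call position `j < i` whose abstract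
successor is undefined or greater than `i`. -/
def CallerCand {A : Type*} (k : A → SymKind) (σ : ℕ → A) (i j : ℕ) : Prop :=
  j < i ∧ k (σ j) = SymKind.call ∧ ∀ m, AbsSucc k σ j m → i < m

/-- `j` is the caller of `i`: the greatest candidate caller. -/
def Caller {A : Type*} (k : A → SymKind) (σ : ℕ → A) (i j : ℕ) : Prop :=
  CallerCand k σ i j ∧ ∀ j', CallerCand k σ i j' → j' ≤ j

/-- `S` is a maximal abstract path (MAP): the set of positions reachable via
the abstract successor from a position `i0` with no abstract predecessor. -/
def IsMAP {A : Type*} (k : A → SymKind) (σ : ℕ → A) (S : Set ℕ) : Prop :=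
  ∃ i0, (¬ ∃ p, AbsSucc k σ p i0) ∧
    S = {j | Relation.ReflTransGen (AbsSucc k σ) i0 j}

/-- The set of positions of the (unique) maximal abstract path visiting `i`. -/
def PosA {A : Type*} (k : A → SymKind) (σ : ℕ → A) (i : ℕ) : Set ℕ :=
  {j | Relation.ReflTransGen (AbsSucc k σ) i j ∨
       Relation.ReflTransGen (AbsSucc k σ) j i}

/-- The set of positions of the caller path of `σ` from `i`. -/
def PosC {A : Type*} (k : A → SymKind) (σ : ℕ → A) (i : ℕ) : Set ℕ :=
  {j | Relation.ReflTransGen (fun a b => Caller k σ a b) i j}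


lemma prefix_append_cases' {α : Type*} {q s t : List α} (h : q <+: s ++ t) :
    q <+: s ∨ ∃ q', q = s ++ q' ∧ q' <+: t := by
  rcases le_or_gt q.length s.length with hl | hl
  · left
    exact List.prefix_of_prefix_length_le h (s.prefix_append t) hl
  · right
    obtain ⟨u, hu⟩ := h
    refine ⟨q.drop s.length, ?_, ?_⟩
    · have : s <+: q := by
        refine List.prefix_of_prefix_length_le (s.prefix_append t) ⟨u, hu⟩ (le_of_lt hl)
      obtain ⟨v, hv⟩ := this
      rw [← hv]; simp
    · refine ⟨u, ?_⟩
      have := congrArg (List.drop s.length) hu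
      rw [List.drop_append_of_le_length (le_of_lt hl)] at this
      simpa using this

lemma callCount_append {A : Type*} (k : A → SymKind) (a b : List A) :
    callCount k (a ++ b) = callCount k a + callCount k b := by
  simp [callCount, List.countP_append]

lemma retCount_append {A : Type*} (k : A → SymKind) (a b : List A) :
    retCount k (a ++ b) = retCount k a + retCount k b := by
  simp [retCount, List.countP_append]

lemma wm_count {A : Type*} {k : A → SymKind} {s : List A} (h : WellMatched k s) :
    callCount k s = retCount k s := by
  induction h with
  | nil => rfl
  | int ha _ ih =>
      simp_all [callCount, retCount, List.countP_cons, ha]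
  | matched hc hr _ _ ih1 ih2 =>
      simp_all [callCount, retCount, List.countP_cons, List.countP_append, hc, hr]
      omega

lemma wm_prefix {A : Type*} {k : A → SymKind} {s : List A} (h : WellMatched k s) :
    ∀ p, p <+: s → retCount k p ≤ callCount k p := by
  induction h with
  | nil =>
      intro p hp
      simp [List.prefix_nil.mp hp, callCount, retCount]
  | @int a s ha _ ih =>
      intro p hp
      cases p with
      | nil => simp [callCount, retCount]
      | cons b q =>
          rw [List.cons_prefix_cons] at hp
          obtain ⟨rfl, hq⟩ := hp
          have := ih q hq
          simp [callCount, retCount, List.countP_cons, ha] at *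
          omega
  | @matched c r s s' hc hr hs hs' ih1 ih2 =>
      intro p hp
      cases p with
      | nil => simp [callCount, retCount]
      | cons b q =>
          rw [List.cons_prefix_cons] at hp
          obtain ⟨rfl, hq⟩ := hp
          rcases prefix_append_cases' hq with hq | ⟨q', rfl, hq'⟩
          · have := ih1 q hq
            simp [callCount, retCount, List.countP_cons, hc] at *
            omega
          · have hcs := wm_count hs
            cases q' with
            | nil =>
                simp only [List.append_nil]
                simp [callCount, retCount, List.countP_cons, List.countP_append, hc] at *
                omega
            | cons b' q'' =>
                rw [List.cons_prefix_cons] at hq'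
                obtain ⟨rfl, hq''⟩ := hq'
                have := ih2 q'' hq''
                simp [callCount, retCount, List.countP_cons, List.countP_append, hc, hr] at *
                omega

lemma wordSlice_append {A : Type*} (σ : ℕ → A) {a b c : ℕ} (hab : a ≤ b) (hbc : b ≤ c) :
    wordSlice σ a c = wordSlice σ a b ++ wordSlice σ b c := by
  unfold wordSlice
  have hk : c - a = (b - a) + (c - b) := by omega
  rw [hk, List.range_add, List.map_append, List.map_map]
  congr 1
  apply List.map_congr_left
  intro n _
  show σ (a + (b - a + n)) = σ (b + n)
  congr 1
  omega

lemma wordSlice_singleton {A : Type*} (σ : ℕ → A) (a : ℕ) :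
    wordSlice σ a (a + 1) = [σ a] := by
  have h : a + 1 - a = 1 := by omega
  rw [wordSlice, h, List.range_succ]
  simp

lemma matchRet_not_lt {A : Type*} {k : A → SymKind} {σ : ℕ → A} {i i' j : ℕ}
    (hm : MatchRet k σ i j) (hm' : MatchRet k σ i' j)
    (hc' : k (σ i') = SymKind.call) (hlt : i < i') : False := by
  obtain ⟨hij, hjret, hwm⟩ := hm
  obtain ⟨hij', _, hwm'⟩ := hm'
  have h1 : i + 1 ≤ i' := hlt
  have h2 : i' + 1 ≤ j := hij'
  have hsplit : wordSlice σ (i + 1) j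
      = (wordSlice σ (i + 1) i' ++ [σ i']) ++ wordSlice σ (i' + 1) j := by
    rw [← wordSlice_singleton σ i',
      ← wordSlice_append σ (by omega : i + 1 ≤ i') (by omega : i' ≤ i' + 1)]
    exact wordSlice_append σ (by omega) h2
  set P := wordSlice σ (i + 1) i' with hP
  set R := wordSlice σ (i' + 1) j with hR
  have hpre : P <+: wordSlice σ (i + 1) j := by
    rw [hsplit]
    exact (P.prefix_append [σ i']).trans ((P ++ [σ i']).prefix_append R)
  have hle := wm_prefix hwm P hpre
  have hcnt := wm_count hwm
  have hcnt' : callCount k R = retCount k R := wm_count hwm'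
  rw [hsplit, callCount_append, callCount_append, retCount_append, retCount_append] at hcnt
  have hsc : callCount k [σ i'] = 1 := by simp [callCount, hc']
  have hsr : retCount k [σ i'] = 0 := by simp [retCount, hc']
  omega

/-- the abstract successor function is injective. -/
theorem absSucc_injective {A : Type*} (k : A → SymKind) (σ : ℕ → A)
    {i i' j : ℕ} (h : AbsSucc k σ i j) (h' : AbsSucc k σ i' j) :
    i = i' := by
  by_cases hc : k (σ i) = SymKind.call <;> by_cases hc' : k (σ i') = SymKind.call
  · rw [AbsSucc, if_pos hc] at h
    rw [AbsSucc, if_pos hc'] at h'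
    by_contra hne
    rcases lt_trichotomy i i' with hlt | heq | hlt
    · exact matchRet_not_lt h h' hc' hlt
    · exact hne heq
    · exact matchRet_not_lt h' h hc hlt
  · rw [AbsSucc, if_pos hc] at h
    rw [AbsSucc, if_neg hc'] at h'
    obtain ⟨rfl, hnr⟩ := h'
    exact absurd h.2.1 hnr
  · rw [AbsSucc, if_neg hc] at h
    rw [AbsSucc, if_pos hc'] at h'
    obtain ⟨rfl, hnr⟩ := h
    exact absurd h'.2.1 hnr
  · rw [AbsSucc, if_neg hc] at h
    rw [AbsSucc, if_neg hc'] at h'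
    omega
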